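/- Let (Γ,⊑) be an extended modular complex and p,q,x vertices with p,x ◇-neighbors. Let a be a gate of q at L^-_p, let b be a gate of q at L^+_p, and let m be a median of a,b,q. Then (x,m,q) is a shortest subpath. -/

import Mathlib

namespace ZeroExt

variable {V : Type*}

/-- The metric interval `I(x,y)` in a graph. -/
def interval (G : SimpleGraph V) (x y : V) : Set V :=
  {z | G.dist x z + G.dist z y = G.dist x y}

/-- `m` is a median of `x, y, z`. -/
def IsMedian (G : SimpleGraph V) (x y z m : V) : Prop :=
  m ∈ interval G x y ∧ m ∈ interval G y z ∧ m ∈ interval G x z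

/-- A graph is modular if every triple of vertices has a median. -/
def Modular (G : SimpleGraph V) : Prop :=
  ∀ x y z : V, ∃ m : V, IsMedian G x y z m

/-- `(a,b,c)` is a shortest subpath. -/
def ShortestTriple (G : SimpleGraph V) (a b c : V) : Prop :=
  G.dist a b + G.dist b c = G.dist a c

/-- `(a,b,c,d)` is a shortest subpath. -/
def ShortestQuad (G : SimpleGraph V) (a b c d : V) : Prop :=
  G.dist a b + G.dist b c + G.dist c d = G.dist a d

/-- `(x1,x2,x3,x4)` is an isometric rectangle. -/
def IsoRect (G : SimpleGraph V) (x1 x2 x3 x4 : V) : Prop :=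
  ShortestTriple G x4 x1 x2 ∧ ShortestTriple G x1 x2 x3 ∧
    ShortestTriple G x2 x3 x4 ∧ ShortestTriple G x3 x4 x1

/-- A set of vertices is convex if it contains the interval of each pair of its points. -/
def Convex (G : SimpleGraph V) (U : Set V) : Prop :=
  ∀ x ∈ U, ∀ y ∈ U, interval G x y ⊆ U

/-- `g` is a gate of `q` at `U`. -/
def IsGate (G : SimpleGraph V) (U : Set V) (q g : V) : Prop :=
  g ∈ U ∧ ∀ u ∈ U, G.dist q u = G.dist q g + G.dist g u

/-- A 4-cycle in a graph. -/
def IsFourCycle (G : SimpleGraph V) (x1 x2 x3 x4 : V) : Prop :=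
  G.Adj x1 x2 ∧ G.Adj x2 x3 ∧ G.Adj x3 x4 ∧ G.Adj x4 x1 ∧ x1 ≠ x3 ∧ x2 ≠ x4

/-- A modular complex: a finite connected modular graph together with an
acyclic admissible edge orientation. -/
structure ModularComplex (V : Type*) [Fintype V] where
  G : SimpleGraph V
  connected : G.Connected
  modular : Modular G
  ori : V → V → Prop
  ori_adj : ∀ {x y : V}, ori x y → G.Adj x y
  ori_total : ∀ {x y : V}, G.Adj x y → ori x y ∨ ori y x
  acyclic : ∀ {x y : V}, Relation.ReflTransGen ori x y → Relation.ReflTransGen ori y x → x = y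
  admissible : ∀ {x1 x2 x3 x4 : V}, IsFourCycle G x1 x2 x3 x4 → ori x1 x2 → ori x4 x3

variable [Fintype V]

/-- The partial order `⪯` induced by the orientation. -/
def ModularComplex.le (Γ : ModularComplex V) : V → V → Prop :=
  Relation.ReflTransGen Γ.ori

/-- The order interval `[p,q]`. -/
def ModularComplex.Icc (Γ : ModularComplex V) (p q : V) : Set V :=
  {x | Γ.le p x ∧ Γ.le x q}

/-- `m` is the greatest lower bound `p ∧ q`. -/
def ModularComplex.IsMeet (Γ : ModularComplex V) (p q m : V) : Prop :=
  Γ.le m p ∧ Γ.le m q ∧ ∀ x : V, Γ.le x p → Γ.le x q → Γ.le x m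

/-- `j` is the least upper bound `p ∨ q`. -/
def ModularComplex.IsJoin (Γ : ModularComplex V) (p q j : V) : Prop :=
  Γ.le p j ∧ Γ.le q j ∧ ∀ x : V, Γ.le p x → Γ.le q x → Γ.le j x

/-- `(p,q)` is a Boolean pair. -/
def ModularComplex.BooleanPair (Γ : ModularComplex V) (p q : V) : Prop :=
  ∃ (k : ℕ) (φ : Finset (Fin k) → V), Function.Injective φ ∧
    φ ∅ = p ∧ φ Finset.univ = q ∧
    ∀ (S : Finset (Fin k)) (i : Fin k), i ∉ S → Γ.ori (φ S) (φ (insert i S))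

/-- An extended modular complex: a modular complex with an admissible relation `⊑`. -/
structure ExtendedModularComplex (V : Type*) [Fintype V] extends ModularComplex V where
  sq : V → V → Prop
  sq_le : ∀ {p q : V}, sq p q → toModularComplex.le p q
  sq_refl : ∀ p : V, sq p p
  sq_edge : ∀ {p q : V}, ori p q → sq p q
  sq_interval : ∀ {p q a b : V}, sq p q → toModularComplex.le a b →
    a ∈ toModularComplex.Icc p q → b ∈ toModularComplex.Icc p q → sq a b
  sq_join : ∀ {p q1 q2 j : V}, sq p q1 → sq p q2 → toModularComplex.IsJoin q1 q2 j → sq p j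
  sq_meet : ∀ {p1 p2 q m : V}, sq p1 q → sq p2 q → toModularComplex.IsMeet p1 p2 m → sq m q

/-- `L^+_p = {x : p ⊑ x}`. -/
def ExtendedModularComplex.Lpos (Γ : ExtendedModularComplex V) (p : V) : Set V :=
  {x | Γ.sq p x}

/-- `L^-_p = {x : x ⊑ p}`. -/
def ExtendedModularComplex.Lneg (Γ : ExtendedModularComplex V) (p : V) : Set V :=
  {x | Γ.sq x p}

/-- `p, q` are ◇-neighbors. -/
def ExtendedModularComplex.DiamondNb (Γ : ExtendedModularComplex V) (p q : V) : Prop :=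
  ∃ a b : V, Γ.sq a b ∧ p ∈ Γ.Icc a b ∧ q ∈ Γ.Icc a b

/-- The thickening `Δ(Γ)`. -/
def ExtendedModularComplex.thick (Γ : ExtendedModularComplex V) : SimpleGraph V where
  Adj p q := p ≠ q ∧ Γ.DiamondNb p q
  symm := by
    constructor
    rintro p q ⟨hne, a, b, hab, hp, hq⟩
    exact ⟨hne.symm, a, b, hab, hq, hp⟩
  loopless := by constructor; rintro p ⟨hne, -⟩; exact hne rfl


section Basic
variable {G : SimpleGraph V} (hc : G.Connected) (hmod : Modular G)

lemma dcomm (x y : V) : G.dist x y = G.dist y x := SimpleGraph.dist_comm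

include hc

lemma dtri (x y z : V) : G.dist x z ≤ G.dist x y + G.dist y z :=
  hc.dist_triangle

lemma dzero {x y : V} (h : G.dist x y = 0) : x = y :=
  (hc.dist_eq_zero_iff).mp h

omit hc in
lemma done {x y : V} (h : G.Adj x y) : G.dist x y = 1 :=
  SimpleGraph.dist_eq_one_iff_adj.mpr h

omit hc in
lemma dadj {x y : V} (h : G.dist x y = 1) : G.Adj x y :=
  SimpleGraph.dist_eq_one_iff_adj.mp h

include hmod

lemma adjdist {x y : V} (h : G.Adj x y) (s : V) :
    G.dist s y = G.dist s x + 1 ∨ G.dist s x = G.dist s y + 1 := by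
  obtain ⟨w, h1, h2, h3⟩ := hmod s x y
  rw [interval, Set.mem_setOf_eq] at h1 h2 h3
  have hxy : G.dist x y = 1 := done h
  rcases Nat.eq_zero_or_pos (G.dist x w) with h0 | hpos
  · have hwx : x = w := dzero hc h0
    left; rw [← hwx] at h3; omega
  · have h0 : G.dist w y = 0 := by omega
    have hwy : w = y := dzero hc h0
    right; rw [hwy] at h1
    have := dcomm (G := G) x y
    omega

lemma dist2 {x y z : V} (h1 : G.Adj x z) (h2 : G.Adj z y) (hne : x ≠ y) {s : V}
    (heq : G.dist x s = G.dist y s) : G.dist x y = 2 := by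
  have hle : G.dist x y ≤ 2 := by
    have := dtri hc x z y
    rw [done h1, done h2] at this; omega
  have hne0 : G.dist x y ≠ 0 := fun h0 => hne (dzero hc h0)
  have hne1 : G.dist x y ≠ 1 := by
    intro h1'
    have hadj : G.Adj x y := dadj h1'
    have c1 := dcomm (G := G) s x
    have c2 := dcomm (G := G) s y
    rcases adjdist hc hmod hadj s with h | h <;> omega
  omega

lemma qc {x y s : V} (h2 : G.dist x y = 2) (heq : G.dist x s = G.dist y s) :
    ∃ w, G.Adj x w ∧ G.Adj w y ∧ G.dist w s + 1 = G.dist x s := by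
  obtain ⟨w, hxy, hys, hxs⟩ := hmod x y s
  rw [interval, Set.mem_setOf_eq] at hxy hys hxs
  rw [h2] at hxy
  have cyx := dcomm (G := G) y x
  rcases Nat.eq_zero_or_pos (G.dist x w) with h0 | hpos
  · exfalso
    have hwx : x = w := dzero hc h0
    rw [← hwx] at hys
    omega
  rcases Nat.eq_zero_or_pos (G.dist w y) with h0 | hpos2
  · exfalso
    have hwy : w = y := dzero hc h0
    rw [hwy] at hxs
    omega
  have hx1 : G.dist x w = 1 := by omega
  have hy1 : G.dist w y = 1 := by omega
  exact ⟨w, dadj hx1, dadj hy1, by omega⟩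

end Basic

section Wall
variable [Fintype V] (Γ : ModularComplex V) (m q : V) (hmq : Γ.G.Adj m q)

/-- m-side: strictly closer to m -/
def Ms (y : V) : Prop := Γ.G.dist y q = Γ.G.dist y m + 1
/-- q-side: strictly closer to q -/
def Qs (y : V) : Prop := Γ.G.dist y m = Γ.G.dist y q + 1

include hmq in
lemma side (y : V) : Ms Γ m q y ∨ Qs Γ m q y := by
  unfold Ms Qs
  have c1 := dcomm (G := Γ.G) y m
  have c2 := dcomm (G := Γ.G) y q
  rcases adjdist Γ.connected Γ.modular hmq y with h | h <;> omega

lemma ori_ne {x y : V} (h : Γ.ori x y) : x ≠ y := (Γ.ori_adj h).ne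

lemma antisym {x y : V} (h1 : Γ.ori x y) (h2 : Γ.ori y x) : False :=
  ori_ne Γ h1 (Γ.acyclic (.single h1) (.single h2))

include hmq

/-- base double-square: a crossing immediately followed by a reverse crossing is impossible -/
lemma base {u u1 y : V} (hou : Γ.ori u u1) (hoy : Γ.ori u1 y)
    (hu : Ms Γ m q u) (hu1 : Qs Γ m q u1) (hy : Ms Γ m q y) : False := by
  classical
  have hc := Γ.connected
  have hmod := Γ.modular
  simp only [Ms, Qs] at hu hu1 hy
  have a1 : Γ.G.Adj u u1 := Γ.ori_adj hou
  have a2 : Γ.G.Adj u1 y := Γ.ori_adj hoy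
  have hdmq : Γ.G.dist m q = 1 := done hmq
  -- profile of u1 relative to u
  have e1 : Γ.G.dist u1 q + 1 = Γ.G.dist u q := by
    rcases adjdist hc hmod a1 q with h | h <;> rcases adjdist hc hmod a1 m with h' | h' <;>
      · rw [dcomm q u1, dcomm q u] at h; rw [dcomm m u1, dcomm m u] at h'; omega
  have e2 : Γ.G.dist u1 m = Γ.G.dist u m + 1 := by
    rcases adjdist hc hmod a1 m with h' | h' <;>
      · rw [dcomm m u1, dcomm m u] at h'; omega
  -- profile of y
  have e3 : Γ.G.dist y q = Γ.G.dist u q ∧ Γ.G.dist y m = Γ.G.dist u m := by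
    rcases adjdist hc hmod a2 q with h | h <;> rcases adjdist hc hmod a2 m with h' | h' <;>
      · rw [dcomm q y, dcomm q u1] at h; rw [dcomm m y, dcomm m u1] at h'; omega
  -- u ≠ y by acyclicity
  have huy : u ≠ y := by
    intro h; subst h
    exact antisym Γ hou hoy
  have d2 : Γ.G.dist u y = 2 := dist2 hc hmod a1 a2 huy (by omega : Γ.G.dist u m = Γ.G.dist y m)
  -- first median square vertex w
  obtain ⟨w, aw1, aw2, hwm⟩ := qc hc hmod d2 (by omega : Γ.G.dist u m = Γ.G.dist y m)
  -- Γ.G.dist w q = Γ.G.dist u m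
  have hwq : Γ.G.dist w q = Γ.G.dist u m := by
    have t1 := dtri hc w m q
    rcases adjdist hc hmod aw1 q with h | h <;>
      · rw [dcomm q w, dcomm q u] at h; omega
  have hw1 : u1 ≠ w := by intro h; subst h; omega
  have d2' : Γ.G.dist u1 w = 2 := dist2 hc hmod a1.symm aw1 hw1 (by omega : Γ.G.dist u1 q = Γ.G.dist w q)
  obtain ⟨w4, aw41, aw42, hw4q⟩ := qc hc hmod d2' (by omega : Γ.G.dist u1 q = Γ.G.dist w q)
  have hw4m : Γ.G.dist w4 m = Γ.G.dist u1 m - 1 := by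
    rcases adjdist hc hmod aw41 m with h | h <;> rcases adjdist hc hmod aw42 m with h' | h' <;>
      · rw [dcomm m w4, dcomm m u1] at h; rw [dcomm m w4, dcomm m w] at h'; omega
  -- squares
  have S1 : IsFourCycle Γ.G u u1 w4 w :=
    ⟨a1, aw41, aw42, aw1.symm, by intro h; subst h; omega, hw1⟩
  have S2 : IsFourCycle Γ.G u1 y w w4 :=
    ⟨a2, aw2.symm, aw42.symm, aw41.symm, hw1, by intro h; subst h; omega⟩
  have o1 : Γ.ori w w4 := Γ.admissible S1 hou
  have o2 : Γ.ori w4 w := Γ.admissible S2 hoy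
  have : w = w4 := Γ.acyclic (.single o1) (.single o2)
  subst this
  omega

/-- re-root: crossing followed by a descending edge produces a lower crossing -/
lemma reroot {u u1 z : V} (hou : Γ.ori u u1) (hoz : Γ.ori u1 z)
    (hu : Ms Γ m q u) (hu1 : Qs Γ m q u1) (hz : Qs Γ m q z)
    (hdesc : Γ.G.dist z q + 1 = Γ.G.dist u1 q) :
    ∃ w, Γ.ori w z ∧ Ms Γ m q w := by
  classical
  have hc := Γ.connected
  have hmod := Γ.modular
  simp only [Ms, Qs] at hu hu1 hz
  have a1 : Γ.G.Adj u u1 := Γ.ori_adj hou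
  have a2 : Γ.G.Adj u1 z := Γ.ori_adj hoz
  have hdmq : Γ.G.dist m q = 1 := done hmq
  have e1 : Γ.G.dist u1 q + 1 = Γ.G.dist u q := by
    rcases adjdist hc hmod a1 q with h | h <;> rcases adjdist hc hmod a1 m with h' | h' <;>
      · rw [dcomm q u1, dcomm q u] at h; rw [dcomm m u1, dcomm m u] at h'; omega
  have e2 : Γ.G.dist u1 m = Γ.G.dist u m + 1 := by
    rcases adjdist hc hmod a1 m with h' | h' <;>
      · rw [dcomm m u1, dcomm m u] at h'; omega
  have huz : u ≠ z := by intro h; subst h; omega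
  have d2 : Γ.G.dist u z = 2 := dist2 hc hmod a1 a2 huz (by omega : Γ.G.dist u m = Γ.G.dist z m)
  obtain ⟨w, aw1, aw2, hwm⟩ := qc hc hmod d2 (by omega : Γ.G.dist u m = Γ.G.dist z m)
  have hwq : Γ.G.dist w q = Γ.G.dist u m := by
    rcases adjdist hc hmod aw1 q with h | h <;> rcases adjdist hc hmod aw2 q with h' | h' <;>
      · rw [dcomm q w, dcomm q u] at h; rw [dcomm q w, dcomm q z] at h'; omega
  have hw1 : u1 ≠ w := by intro h; subst h; omega
  have S1 : IsFourCycle Γ.G u u1 z w :=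
    ⟨a1, a2, aw2.symm, aw1.symm, huz, hw1⟩
  refine ⟨w, Γ.admissible S1 hou, ?_⟩
  simp only [Ms]
  omega

/-- case A: ascend-then-cross produces a lower m-side vertex -/
lemma caseA {zm z y : V} (hoz : Γ.ori zm z) (hoy : Γ.ori z y)
    (hzm : Qs Γ m q zm) (hz : Qs Γ m q z) (hy : Ms Γ m q y)
    (hasc : Γ.G.dist z q = Γ.G.dist zm q + 1) :
    ∃ w, Γ.ori zm w ∧ Ms Γ m q w ∧ Γ.G.dist w q = Γ.G.dist zm q + 1 ∧
      Γ.G.dist y q = Γ.G.dist z q + 1 := by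
  classical
  have hc := Γ.connected
  have hmod := Γ.modular
  simp only [Ms, Qs] at hzm hz hy
  have a1 : Γ.G.Adj zm z := Γ.ori_adj hoz
  have a2 : Γ.G.Adj z y := Γ.ori_adj hoy
  have hdmq : Γ.G.dist m q = 1 := done hmq
  -- profile of y
  have e3 : Γ.G.dist y q = Γ.G.dist z q + 1 ∧ Γ.G.dist y m = Γ.G.dist z m - 1 := by
    rcases adjdist hc hmod a2 q with h | h <;> rcases adjdist hc hmod a2 m with h' | h' <;>
      · rw [dcomm q y, dcomm q z] at h; rw [dcomm m y, dcomm m z] at h'; omega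
  have hne : zm ≠ y := by intro h; subst h; omega
  have d2 : Γ.G.dist zm y = 2 := dist2 hc hmod a1 a2 hne (by omega : Γ.G.dist zm m = Γ.G.dist y m)
  obtain ⟨w, aw1, aw2, hwm⟩ := qc hc hmod d2 (by omega : Γ.G.dist zm m = Γ.G.dist y m)
  have hwq : Γ.G.dist w q = Γ.G.dist zm q + 1 := by
    rcases adjdist hc hmod aw1 q with h | h <;> rcases adjdist hc hmod aw2 q with h' | h' <;>
      · rw [dcomm q w, dcomm q zm] at h; rw [dcomm q w, dcomm q y] at h'; omega
  have S : IsFourCycle Γ.G z y w zm :=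
    ⟨a2, aw2.symm, aw1.symm, a1, by intro h; subst h; omega, by intro h; subst h; omega⟩
  refine ⟨w, Γ.admissible S hoy, by simp only [Ms]; omega, hwq, e3.1⟩

/-- peak transport -/
lemma peak {a b c : V} (hab : Γ.ori a b) (hbc : Γ.ori b c)
    (ha : Qs Γ m q a) (hb : Qs Γ m q b) (hcq : Qs Γ m q c)
    (hasc : Γ.G.dist b q = Γ.G.dist a q + 1) (hdesc : Γ.G.dist c q + 1 = Γ.G.dist b q) :
    ∃ w, Γ.ori a w ∧ Γ.ori w c ∧ Qs Γ m q w ∧ Γ.G.dist w q + 1 = Γ.G.dist a q := by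
  classical
  have hc := Γ.connected
  have hmod := Γ.modular
  simp only [Ms, Qs] at ha hb hcq
  have a1 : Γ.G.Adj a b := Γ.ori_adj hab
  have a2 : Γ.G.Adj b c := Γ.ori_adj hbc
  have hdmq : Γ.G.dist m q = 1 := done hmq
  have em : Γ.G.dist b m = Γ.G.dist a m + 1 ∧ Γ.G.dist c m = Γ.G.dist b m - 1 := by
    constructor
    · rcases adjdist hc hmod a1 m with h | h <;>
        · rw [dcomm m b, dcomm m a] at h; omega
    · rcases adjdist hc hmod a2 m with h | h <;>
        · rw [dcomm m c, dcomm m b] at h; omega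
  have hne : a ≠ c := by
    intro h; subst h; exact antisym Γ hab hbc
  have d2 : Γ.G.dist a c = 2 := dist2 hc hmod a1 a2 hne (by omega : Γ.G.dist a q = Γ.G.dist c q)
  obtain ⟨w, aw1, aw2, hwq⟩ := qc hc hmod d2 (by omega : Γ.G.dist a q = Γ.G.dist c q)
  have hwm : Γ.G.dist w m = Γ.G.dist a q := by
    have t1 := side Γ m q hmq w
    simp only [Ms, Qs] at t1
    rcases adjdist hc hmod aw1 m with h | h <;>
      · rw [dcomm m w, dcomm m a] at h; omega
  have S1 : IsFourCycle Γ.G a b c w :=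
    ⟨a1, a2, aw2.symm, aw1.symm, hne, by intro h; subst h; omega⟩
  have S2 : IsFourCycle Γ.G b c w a :=
    ⟨a2, aw2.symm, aw1.symm, a1, by intro h; subst h; omega, by
      intro h; exact hne h.symm⟩
  exact ⟨w, Γ.admissible S2 hbc, Γ.admissible S1 hab, by simp only [Qs]; omega, hwq⟩

end Wall

section Path
variable [Fintype V] (Γ : ModularComplex V) (m q : V) (hmq : Γ.G.Adj m q)

noncomputable def mu (G : SimpleGraph V) (q : V) (l : List V) : ℕ := (l.map (fun x => G.dist x q)).sum

lemma mu_cons (G : SimpleGraph V) (q a : V) (l : List V) :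
    mu G q (a :: l) = G.dist a q + mu G q l := by simp [mu]

lemma mu_append (G : SimpleGraph V) (q : V) (l1 l2 : List V) :
    mu G q (l1 ++ l2) = mu G q l1 + mu G q l2 := by simp [mu]

lemma getLast_snoc (l : List V) (a z : V) : (a :: (l ++ [z])).getLast (by simp) = z := by
  show ((a :: l) ++ [z]).getLast (by simp) = z
  exact List.getLast_concat

lemma getLast_cc (a b : V) (l : List V) :
    ((a :: b :: l).getLast (by simp)) = ((b :: l).getLast (by simp)) :=
  List.getLast_cons (List.cons_ne_nil b l)

lemma chain_snoc {R : V → V → Prop} : ∀ (l : List V) (a z : V),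
    List.Chain R a (l ++ [z]) ↔
      List.Chain R a l ∧ R ((a :: l).getLast (List.cons_ne_nil a l)) z := by
  intro l
  induction l with
  | nil => intro a z; exact ⟨fun h => ⟨List.Chain.nil, (List.chain_cons.mp h).1⟩, fun h => List.chain_cons.mpr ⟨h.2, List.Chain.nil⟩⟩
  | cons b l ih =>
    intro a z
    simp only [List.cons_append]
    constructor
    · intro h
      obtain ⟨h1, h2⟩ := List.chain_cons.mp h
      obtain ⟨h3, h4⟩ := (ih b z).mp h2
      exact ⟨List.chain_cons.mpr ⟨h1, h3⟩, by rw [getLast_cc]; exact h4⟩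
    · rintro ⟨h1, h2⟩
      rw [getLast_cc] at h2
      exact List.chain_cons.mpr ⟨(List.chain_cons.mp h1).1, (ih b z).mpr ⟨(List.chain_cons.mp h1).2, h2⟩⟩

lemma snoc_inj {l1 l2 : List V} {x y : V} (h : l1 ++ [x] = l2 ++ [y]) :
    l1 = l2 ∧ x = y := by
  have hlen : l1.length = l2.length := by
    have := congrArg List.length h
    simp at this; omega
  obtain ⟨h1, h2⟩ := List.append_inj h hlen
  exact ⟨h1, by simpa using h2⟩

include hmq in
lemma ms_qs_excl {x : V} (h1 : Ms Γ m q x) (h2 : Qs Γ m q x) : False := by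
  simp only [Ms, Qs] at h1 h2; omega

include hmq in
lemma qs_dichot {x y : V} (hx : Qs Γ m q x) (hy : Qs Γ m q y) (hadj : Γ.G.Adj x y) :
    Γ.G.dist y q = Γ.G.dist x q + 1 ∨ Γ.G.dist y q + 1 = Γ.G.dist x q := by
  have c1 := dcomm (G := Γ.G) q x
  have c2 := dcomm (G := Γ.G) q y
  rcases adjdist Γ.connected Γ.modular hadj q with h | h <;> omega

include hmq in
/-- scan for a peak: either the first edge descends, or we can transport a peak -/
lemma PK : ∀ (l : List V) (a : V), List.Chain Γ.ori a l → l ≠ [] →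
    (∀ x ∈ a :: l, Qs Γ m q x) →
    (∀ (l'' : List V) (z : V), l = l'' ++ [z] →
      Γ.G.dist z q + 1 = Γ.G.dist ((a :: l'').getLast (List.cons_ne_nil a l'')) q) →
    (∃ b l2, l = b :: l2 ∧ Γ.G.dist b q + 1 = Γ.G.dist a q) ∨
    (∃ l', List.Chain Γ.ori a l' ∧ (∀ x ∈ a :: l', Qs Γ m q x) ∧
      ((a :: l').getLast (List.cons_ne_nil a l') = (a :: l).getLast (List.cons_ne_nil a l)) ∧
      l'.length = l.length ∧ mu Γ.G q (a :: l') + 2 = mu Γ.G q (a :: l)) := by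
  intro l
  induction l with
  | nil => intro a _ hne; exact absurd rfl hne
  | cons b l2 ih =>
    intro a hchain _ hqs hlast
    have hab : Γ.ori a b := (List.chain_cons.mp hchain).1
    have hch2 : List.Chain Γ.ori b l2 := (List.chain_cons.mp hchain).2
    have hqa : Qs Γ m q a := hqs a (by simp)
    have hqb : Qs Γ m q b := hqs b (by simp)
    rcases qs_dichot Γ m q hmq hqa hqb (Γ.ori_adj hab) with hasc | hdesc
    swap
    · exact Or.inl ⟨b, l2, rfl, hdesc⟩
    cases l2 with
    | nil =>
      -- single edge, must descend by hlast, contradiction with ascent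
      exfalso
      have := hlast [] b rfl
      simp at this
      omega
    | cons c l3 =>
      have hbc : Γ.ori b c := (List.chain_cons.mp hch2).1
      have hch3 : List.Chain Γ.ori c l3 := (List.chain_cons.mp hch2).2
      have hqc : Qs Γ m q c := hqs c (by simp)
      rcases qs_dichot Γ m q hmq hqb hqc (Γ.ori_adj hbc) with hasc2 | hdesc2
      · -- both ascend: recurse on tail
        have hlast' : ∀ (l'' : List V) (z : V), c :: l3 = l'' ++ [z] →
            Γ.G.dist z q + 1 = Γ.G.dist ((b :: l'').getLast (List.cons_ne_nil b l'')) q := by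
          intro l'' z hz
          have := hlast (b :: l'') z (by rw [hz]; rfl)
          rwa [getLast_cc] at this
        rcases ih b hch2 (by simp) (fun x hx => hqs x (by simp at hx ⊢; tauto)) hlast' with
          ⟨b', l2', heq, hdesc'⟩ | ⟨l2', hch', hqs', hlast2, hlen, hmu2⟩
        · exfalso
          rw [List.cons.injEq] at heq
          obtain ⟨rfl, _⟩ := heq
          omega
        · refine Or.inr ⟨b :: l2', List.chain_cons.mpr ⟨hab, hch'⟩, ?_, ?_, by simp [hlen], ?_⟩
          · intro x hx
            simp only [List.mem_cons] at hx
            rcases hx with rfl | rfl | hx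
            · exact hqa
            · exact hqb
            · exact hqs' x (by simp [hx])
          · rw [getLast_cc, getLast_cc, hlast2]
          · rw [mu_cons Γ.G q a (b :: l2'), mu_cons Γ.G q a (b :: c :: l3)]
            omega
      · -- peak at b
        obtain ⟨w, oaw, owc, hqw, hwq⟩ :=
          peak Γ m q hmq hab hbc hqa hqb hqc hasc hdesc2
        refine Or.inr ⟨w :: c :: l3, List.chain_cons.mpr ⟨oaw, List.chain_cons.mpr ⟨owc, hch3⟩⟩,
          ?_, ?_, by simp, ?_⟩
        · intro x hx
          simp only [List.mem_cons] at hx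
          rcases hx with rfl | rfl | hx
          · exact hqa
          · exact hqw
          · exact hqs x (by simp at hx ⊢; tauto)
        · rw [getLast_cc, getLast_cc, getLast_cc, getLast_cc]
        · rw [mu_cons Γ.G q a (w :: c :: l3), mu_cons Γ.G q a (b :: c :: l3),
            mu_cons Γ.G q w (c :: l3), mu_cons Γ.G q b (c :: l3)]
          omega

include hmq in
/-- main induction: no m-side vertex reachable above a crossing -/
lemma Tmain : ∀ (N : ℕ), ∀ (u u1 : V) (l : List V) (y : V),
    Γ.ori u u1 → Ms Γ m q u → Qs Γ m q u1 →
    List.Chain Γ.ori u1 (l ++ [y]) →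
    (∀ x ∈ u1 :: l, Qs Γ m q x) → Ms Γ m q y →
    mu Γ.G q (u1 :: (l ++ [y])) = N → False := by
  intro N
  induction N using Nat.strong_induction_on with
  | _ N IH =>
  intro u u1 l y hou hMu hQu1 hchain hQall hMy hN
  obtain ⟨hchain_l, hzy⟩ := (chain_snoc _ _ _).mp hchain
  rcases List.eq_nil_or_concat' l with rfl | ⟨l'', z0, rfl⟩
  · simp at hzy
    exact base Γ m q hmq hou hzy hMu hQu1 hMy
  · rw [getLast_snoc] at hzy
    obtain ⟨hchain'', hz2⟩ := (chain_snoc _ _ _).mp hchain_l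
    have hQz0 : Qs Γ m q z0 := hQall z0 (by simp)
    have hQzm : Qs Γ m q ((u1 :: l'').getLast (List.cons_ne_nil u1 l'')) :=
      hQall _ (by
        have := List.getLast_mem (List.cons_ne_nil u1 l'')
        simp only [List.mem_cons] at this ⊢
        rcases this with h | h
        · exact Or.inl h
        · exact Or.inr (by simp [h]))
    rcases qs_dichot Γ m q hmq hQzm hQz0 (Γ.ori_adj hz2) with hasc | hdesc
    · -- case A
      obtain ⟨w, ozw, hMw, hwq, hyq⟩ := caseA Γ m q hmq hz2 hzy hQzm hQz0 hMy hasc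
      have hch : List.Chain Γ.ori u1 (l'' ++ [w]) := (chain_snoc _ _ _).mpr ⟨hchain'', ozw⟩
      refine IH (mu Γ.G q (u1 :: (l'' ++ [w]))) ?_ u u1 l'' w hou hMu hQu1 hch
        (fun x hx => hQall x (by simp at hx ⊢; tauto)) hMw rfl
      -- measure decreases
      have m1 : mu Γ.G q (u1 :: (l'' ++ [w])) = mu Γ.G q (u1 :: l'') + Γ.G.dist w q := by
        rw [show u1 :: (l'' ++ [w]) = (u1 :: l'') ++ [w] from rfl, mu_append]
        simp [mu]
      have m2 : mu Γ.G q (u1 :: ((l'' ++ [z0]) ++ [y]))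
          = mu Γ.G q (u1 :: l'') + Γ.G.dist z0 q + Γ.G.dist y q := by
        rw [show u1 :: ((l'' ++ [z0]) ++ [y]) = ((u1 :: l'') ++ [z0]) ++ [y] from rfl,
          mu_append, mu_append]
        simp [mu]
      omega
    · -- last edge descends: scan
      have hlastdesc : ∀ (ll : List V) (z' : V), l'' ++ [z0] = ll ++ [z'] →
          Γ.G.dist z' q + 1 = Γ.G.dist ((u1 :: ll).getLast (List.cons_ne_nil u1 ll)) q := by
        intro ll z' hz'
        obtain ⟨rfl, rfl⟩ := snoc_inj hz'
        exact hdesc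
      rcases PK Γ m q hmq (l'' ++ [z0]) u1 hchain_l (by simp) hQall hlastdesc with
        ⟨b, l2, heq, hdescfirst⟩ | ⟨l', hch', hqs', hlast2, _, hmu2⟩
      · -- whole-path first edge descends: re-root
        have hob : Γ.ori u1 b := by
          rw [heq] at hchain_l
          exact (List.chain_cons.mp hchain_l).1
        have hQb : Qs Γ m q b := hQall b (by rw [heq]; simp)
        obtain ⟨w, owb, hMw⟩ := reroot Γ m q hmq hou hob hMu hQu1 hQb hdescfirst
        have hch2 : List.Chain Γ.ori b (l2 ++ [y]) := by
          rw [heq] at hchain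
          exact (List.chain_cons.mp (show List.Chain Γ.ori u1 (b :: (l2 ++ [y])) from hchain)).2
        refine IH (mu Γ.G q (b :: (l2 ++ [y]))) ?_ w b l2 y owb hMw hQb hch2
          (fun x hx => hQall x (by rw [heq]; simp at hx ⊢; tauto)) hMy rfl
        have : mu Γ.G q (u1 :: ((l'' ++ [z0]) ++ [y]))
            = Γ.G.dist u1 q + mu Γ.G q (b :: (l2 ++ [y])) := by
          rw [mu_cons, heq]
          rfl
        omega
      · -- transported path with smaller mu
        have hz0' : (u1 :: (l'' ++ [z0])).getLast (List.cons_ne_nil _ _) = z0 := getLast_snoc _ _ _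
        have hch2 : List.Chain Γ.ori u1 (l' ++ [y]) :=
          (chain_snoc _ _ _).mpr ⟨hch', by rw [hlast2, hz0']; exact hzy⟩
        refine IH (mu Γ.G q (u1 :: (l' ++ [y]))) ?_ u u1 l' y hou hMu hQu1 hch2 hqs' hMy rfl
        have m1 : mu Γ.G q (u1 :: (l' ++ [y])) = mu Γ.G q (u1 :: l') + Γ.G.dist y q := by
          rw [show u1 :: (l' ++ [y]) = (u1 :: l') ++ [y] from rfl, mu_append]
          simp [mu]
        have m2 : mu Γ.G q (u1 :: ((l'' ++ [z0]) ++ [y]))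
            = mu Γ.G q (u1 :: (l'' ++ [z0])) + Γ.G.dist y q := by
          rw [show u1 :: ((l'' ++ [z0]) ++ [y]) = (u1 :: (l'' ++ [z0])) ++ [y] from rfl, mu_append]
          simp [mu]
        omega

end Path

section WallMain
variable [Fintype V] (Γ : ModularComplex V) (m q : V) (hmq : Γ.G.Adj m q)

lemma rtg_chain {a b : V} (h : Relation.ReflTransGen Γ.ori a b) :
    ∃ l : List V, List.Chain Γ.ori a l ∧ (a :: l).getLast (List.cons_ne_nil a l) = b := by
  induction h with
  | refl => exact ⟨[], List.Chain.nil, rfl⟩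
  | @tail b c _ hbc ih =>
    obtain ⟨l, hch, hlast⟩ := ih
    exact ⟨l ++ [c], (chain_snoc _ _ _).mpr ⟨hch, hlast ▸ hbc⟩, getLast_snoc _ _ _⟩

lemma rtg_of_chain : ∀ (l : List V) (a : V), List.Chain Γ.ori a l →
    Relation.ReflTransGen Γ.ori a ((a :: l).getLast (List.cons_ne_nil a l)) := by
  intro l
  induction l with
  | nil => intro a _; exact Relation.ReflTransGen.refl
  | cons b l ih =>
    intro a hch
    rw [getLast_cc]
    exact Relation.ReflTransGen.head (List.chain_cons.mp hch).1 (ih b (List.chain_cons.mp hch).2)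

include hmq in
lemma first_m : ∀ (l : List V) (a : V), List.Chain Γ.ori a l → Qs Γ m q a →
    Ms Γ m q ((a :: l).getLast (List.cons_ne_nil a l)) →
    ∃ (l1 : List V) (y : V), List.Chain Γ.ori a (l1 ++ [y]) ∧
      (∀ x ∈ a :: l1, Qs Γ m q x) ∧ Ms Γ m q y := by
  intro l
  induction l with
  | nil =>
    intro a _ hq hm
    exact ((ms_qs_excl Γ m q hmq (by simpa using hm) hq)).elim
  | cons b l ih =>
    intro a hch hq hm
    have hab : Γ.ori a b := (List.chain_cons.mp hch).1
    have hch2 : List.Chain Γ.ori b l := (List.chain_cons.mp hch).2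
    rcases side Γ m q hmq b with hMb | hQb
    · refine ⟨[], b, List.chain_cons.mpr ⟨hab, List.Chain.nil⟩, ?_, hMb⟩
      intro x hx; simp at hx; subst hx; exact hq
    · rw [getLast_cc] at hm
      obtain ⟨l1, y, hch', hq', hm'⟩ := ih b hch2 hQb hm
      refine ⟨b :: l1, y, List.chain_cons.mpr ⟨hab, hch'⟩, ?_, hm'⟩
      intro x hx
      simp only [List.mem_cons] at hx
      rcases hx with rfl | hx
      · exact hq
      · exact hq' x (List.mem_cons.mpr hx)

include hmq in
/-- Above a crossing everything stays on the q-side. -/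
lemma wallW {u u1 v : V} (hou : Γ.ori u u1) (hMu : Ms Γ m q u) (hQu1 : Qs Γ m q u1)
    (hrtg : Relation.ReflTransGen Γ.ori u1 v) (hMv : Ms Γ m q v) : False := by
  obtain ⟨l, hch, hlast⟩ := rtg_chain Γ hrtg
  obtain ⟨l1, y, hch', hq', hm'⟩ := first_m Γ m q hmq l u1 hch hQu1 (hlast ▸ hMv)
  exact Tmain Γ m q hmq (mu Γ.G q (u1 :: (l1 ++ [y]))) u u1 l1 y hou hMu hQu1 hch' hq' hm' rfl

include hmq in
lemma find_cross : ∀ (l : List V) (a : V), List.Chain Γ.ori a l → Ms Γ m q a →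
    Qs Γ m q ((a :: l).getLast (List.cons_ne_nil a l)) →
    ∃ p1 p2, Γ.ori p1 p2 ∧ Ms Γ m q p1 ∧ Qs Γ m q p2 ∧
      Relation.ReflTransGen Γ.ori p2 ((a :: l).getLast (List.cons_ne_nil a l)) := by
  intro l
  induction l with
  | nil =>
    intro a _ hm hq
    exact ((ms_qs_excl Γ m q hmq hm (by simpa using hq))).elim
  | cons b l ih =>
    intro a hch hm hq
    have hab : Γ.ori a b := (List.chain_cons.mp hch).1
    have hch2 : List.Chain Γ.ori b l := (List.chain_cons.mp hch).2
    rw [getLast_cc] at hq ⊢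
    rcases side Γ m q hmq b with hMb | hQb
    · exact ih b hch2 hMb hq
    · exact ⟨a, b, hab, hm, hQb, rtg_of_chain Γ l b hch2⟩

include hmq in
/-- the wall case `d(m,q) = 1` of the interval propagation -/
lemma C2one {u x v : V} (hMu : Ms Γ m q u) (hMv : Ms Γ m q v)
    (hux : Relation.ReflTransGen Γ.ori u x) (hxv : Relation.ReflTransGen Γ.ori x v) :
    Ms Γ m q x := by
  rcases side Γ m q hmq x with hMx | hQx
  · exact hMx
  exfalso
  obtain ⟨l, hch, hlast⟩ := rtg_chain Γ hux
  obtain ⟨p1, p2, ho, hm1, hq2, hr⟩ := find_cross Γ m q hmq l u hch hMu (hlast ▸ hQx)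
  rw [hlast] at hr
  exact wallW Γ m q hmq ho hm1 hq2 (hr.trans hxv) hMv

end WallMain

section C2sec
variable [Fintype V] (Γ : ModularComplex V)

lemma step_to (s r : V) (h : 1 ≤ Γ.G.dist s r) :
    ∃ z, Γ.G.Adj s z ∧ Γ.G.dist z r + 1 = Γ.G.dist s r := by
  obtain ⟨p, hp⟩ := (Γ.connected s r).exists_walk_length_eq_dist
  cases p with
  | nil => rw [SimpleGraph.dist_self] at h; omega
  | cons hadj p' =>
    rename_i z
    refine ⟨z, hadj, ?_⟩
    have h1 : Γ.G.dist z r ≤ p'.length := SimpleGraph.dist_le p'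
    have h2 := dtri Γ.connected s z r
    rw [done hadj] at h2
    simp only [SimpleGraph.Walk.length_cons] at hp
    omega

/-- interval propagation along the order -/
lemma C2gen : ∀ (t : ℕ) (m q u x v : V), Γ.G.dist m q = t →
    Relation.ReflTransGen Γ.ori u x → Relation.ReflTransGen Γ.ori x v →
    Γ.G.dist u q = Γ.G.dist u m + t → Γ.G.dist v q = Γ.G.dist v m + t →
    Γ.G.dist x q = Γ.G.dist x m + t := by
  intro t
  induction t using Nat.strong_induction_on with
  | _ t IH =>
  intro m q u x v ht hux hxv hu hv
  match t, ht with
  | 0, ht =>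
    have : m = q := dzero Γ.connected ht
    subst this
    simpa using hu
  | 1, ht =>
    have hmq : Γ.G.Adj m q := dadj ht
    exact C2one Γ m q hmq hu hv hux hxv
  | (t' + 2), ht =>
    obtain ⟨z, hadj, hz⟩ := step_to Γ m q (by omega)
    have hmz : Γ.G.dist m z = 1 := done hadj
    -- d u z = d u m + 1
    have huz : Γ.G.dist u z = Γ.G.dist u m + 1 := by
      have t1 := dtri Γ.connected u m z
      have t2 := dtri Γ.connected u z q
      omega
    have hvz : Γ.G.dist v z = Γ.G.dist v m + 1 := by
      have t1 := dtri Γ.connected v m z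
      have t2 := dtri Γ.connected v z q
      omega
    have hxz : Γ.G.dist x z = Γ.G.dist x m + 1 :=
      IH 1 (by omega) m z u x v hmz hux hxv huz hvz
    have hxq : Γ.G.dist x q = Γ.G.dist x z + (t' + 1) :=
      IH (t' + 1) (by omega) z q u x v (by omega) hux hxv (by omega) (by omega)
    omega

end C2sec

/-- If `p, x` are ◇-neighbors then `(x, p ◇ q, q)` is a shortest
subpath, where `p ◇ q` is a median of the gates of `q` at `L^-_p` and `L^+_p`. -/
theorem diamond_shortest_of_diamondNb (Γ : ExtendedModularComplex V) (p q x a b m : V)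
    (hx : Γ.DiamondNb p x)
    (ha : IsGate Γ.G (Γ.Lneg p) q a) (hb : IsGate Γ.G (Γ.Lpos p) q b)
    (hm : IsMedian Γ.G a b q m) :
    ShortestTriple Γ.G x m q := by
  obtain ⟨u, v, huv, hp, hxm⟩ := hx
  have hle_uv : Γ.le u v := Γ.sq_le huv
  have hup : Γ.sq u p :=
    Γ.sq_interval huv hp.1 ⟨Relation.ReflTransGen.refl, hle_uv⟩ hp
  have hpv : Γ.sq p v :=
    Γ.sq_interval huv hp.2 hp ⟨hle_uv, Relation.ReflTransGen.refl⟩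
  have hc := Γ.connected
  have g1 : Γ.G.dist q u = Γ.G.dist q a + Γ.G.dist a u := ha.2 u hup
  have g2 : Γ.G.dist q v = Γ.G.dist q b + Γ.G.dist b v := hb.2 v hpv
  have med1 : Γ.G.dist a m + Γ.G.dist m q = Γ.G.dist a q := hm.2.2
  have med2 : Γ.G.dist b m + Γ.G.dist m q = Γ.G.dist b q := hm.2.1
  -- m ∈ I(u,q)
  have hu_int : Γ.G.dist u q = Γ.G.dist u m + Γ.G.dist m q := by
    have t1 := dtri hc u a m
    have t2 := dtri hc u m q
    have c1 := dcomm (G := Γ.G) q u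
    have c2 := dcomm (G := Γ.G) q a
    have c3 := dcomm (G := Γ.G) a u
    omega
  -- m ∈ I(v,q)
  have hv_int : Γ.G.dist v q = Γ.G.dist v m + Γ.G.dist m q := by
    have t1 := dtri hc v b m
    have t2 := dtri hc v m q
    have c1 := dcomm (G := Γ.G) q v
    have c2 := dcomm (G := Γ.G) q b
    have c3 := dcomm (G := Γ.G) b v
    omega
  have hx_int : Γ.G.dist x q = Γ.G.dist x m + Γ.G.dist m q :=
    C2gen Γ.toModularComplex (Γ.G.dist m q) m q u x v rfl hxm.1 hxm.2 hu_int hv_int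
  exact hx_int.symm

end ZeroExt
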